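/- arXiv:1402.4862 — 3 statements merged into one kernel-verified Lean document; each statement's English description precedes it below -/
import Mathlib

section
/- The elementary symmetric polynomial e_k is Schur-concave on nonnegative vectors: if x, y ∈ R^N have nonnegative entries and x is majorized by y, then e_k(x) ≥ e_k(y). -/
/-- `x` is majorized by `y` (`x ≺ y`): every partial sum of `x` over a subset
is dominated by the sum of `y` over some subset of the same cardinality (this
is equivalent to domination of the sorted partial sums), and the total sums
agree. -/
def Majorizes {N : ℕ} (x y : Fin N → ℝ) : Prop :=
  (∀ A : Finset (Fin N), ∃ B : Finset (Fin N), B.card = A.card ∧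
      ∑ i ∈ A, x i ≤ ∑ i ∈ B, y i) ∧
    ∑ i, x i = ∑ i, y i

/-- The `k`-th elementary symmetric polynomial of `x_1, ..., x_N`. -/
def esymmFin {N : ℕ} (x : Fin N → ℝ) (k : ℕ) : ℝ :=
  ∑ J ∈ Finset.univ.powersetCard k, ∏ j ∈ J, x j

open Finset

namespace SchurAux

variable {N : ℕ}

/-- sum of entries with index (as ℕ) below `m` -/
noncomputable def psum (y : Fin N → ℝ) (m : ℕ) : ℝ :=
  ∑ i ∈ univ.filter (fun i : Fin N => (i : ℕ) < m), y i

lemma psum_split (y : Fin N → ℝ) {m₁ m₂ : ℕ} (h : m₁ ≤ m₂) :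
    psum y m₂ = psum y m₁ +
      ∑ i ∈ univ.filter (fun i : Fin N => m₁ ≤ (i : ℕ) ∧ (i : ℕ) < m₂), y i := by
  classical
  have hset : univ.filter (fun i : Fin N => (i : ℕ) < m₂) =
      univ.filter (fun i : Fin N => (i : ℕ) < m₁) ∪
        univ.filter (fun i : Fin N => m₁ ≤ (i : ℕ) ∧ (i : ℕ) < m₂) := by
    ext i; simp only [mem_filter, mem_union, mem_univ, true_and]; omega
  have hdis : Disjoint (univ.filter (fun i : Fin N => (i : ℕ) < m₁))
      (univ.filter (fun i : Fin N => m₁ ≤ (i : ℕ) ∧ (i : ℕ) < m₂)) := by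
    rw [Finset.disjoint_left]
    intro a ha hb
    simp only [mem_filter] at ha hb; omega
  rw [psum, psum, hset, Finset.sum_union hdis]

lemma psum_mono (y : Fin N → ℝ) (hy : ∀ i, 0 ≤ y i) {m₁ m₂ : ℕ} (h : m₁ ≤ m₂) :
    psum y m₁ ≤ psum y m₂ := by
  rw [psum_split y h]
  have : 0 ≤ ∑ i ∈ univ.filter (fun i : Fin N => m₁ ≤ (i : ℕ) ∧ (i : ℕ) < m₂), y i :=
    Finset.sum_nonneg fun i _ => hy i
  linarith

lemma psum_succ_at (y : Fin N → ℝ) (j : Fin N) :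
    psum y ((j : ℕ) + 1) = psum y (j : ℕ) + y j := by
  rw [psum_split y (Nat.le_succ _)]
  congr 1
  have : univ.filter (fun i : Fin N => (j : ℕ) ≤ (i : ℕ) ∧ (i : ℕ) < (j : ℕ) + 1) = {j} := by
    ext i
    simp only [mem_filter, mem_univ, true_and, mem_singleton, Fin.ext_iff]
    omega
  rw [this, Finset.sum_singleton]

/-- index ≤ j sum splits -/
lemma sum_le_split (f : Fin N → ℝ) (j : Fin N) :
    ∑ i, f i = (∑ i ∈ univ.filter (fun i : Fin N => i ≤ j), f i) +
      ∑ i ∈ univ.filter (fun i : Fin N => j < i), f i := by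
  classical
  rw [← Finset.sum_filter_add_sum_filter_not univ (fun i => i ≤ j) f]
  have : univ.filter (fun i : Fin N => ¬ i ≤ j) = univ.filter (fun i : Fin N => j < i) := by
    ext i; simp [not_le]
  rw [this]

lemma filter_le_eq (j : Fin N) :
    univ.filter (fun i : Fin N => i ≤ j) = univ.filter (fun i : Fin N => (i : ℕ) < (j : ℕ) + 1) := by
  ext i; simp only [mem_filter, mem_univ, true_and, Fin.le_def]; omega

/-- correction of a sum after a transfer at two coordinates -/
lemma sum_corr {y y' : Fin N → ℝ} {j l : Fin N} (hjl : j ≠ l) {t : ℝ}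
    (h1 : y' j = y j - t) (h2 : y' l = y l + t)
    (h3 : ∀ i, i ≠ j → i ≠ l → y' i = y i) (s : Finset (Fin N)) :
    ∑ i ∈ s, y' i = (∑ i ∈ s, y i) +
      ((if j ∈ s then -t else 0) + (if l ∈ s then t else 0)) := by
  classical
  have key : ∀ i, y' i = y i + ((if i = j then -t else 0) + (if i = l then t else 0)) := by
    intro i
    by_cases hij : i = j
    · subst hij; rw [h1, if_pos rfl, if_neg hjl]; ring
    · by_cases hil : i = l
      · subst hil; rw [h2, if_neg hij, if_pos rfl]; ring
      · rw [h3 i hij hil, if_neg hij, if_neg hil]; ring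
  calc ∑ i ∈ s, y' i
      = ∑ i ∈ s, (y i + ((if i = j then -t else 0) + (if i = l then t else 0))) := by
        exact Finset.sum_congr rfl fun i _ => key i
    _ = (∑ i ∈ s, y i) + ((∑ i ∈ s, if i = j then -t else 0) +
          (∑ i ∈ s, if i = l then t else 0)) := by
        rw [Finset.sum_add_distrib, Finset.sum_add_distrib]
    _ = _ := by
        rw [Finset.sum_ite_eq' s j (fun _ => -t), Finset.sum_ite_eq' s l (fun _ => t)]

lemma le_apply_of_orderEmb {c : ℕ} (f : Fin c ↪o Fin N) (i : Fin c) :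
    (i : ℕ) ≤ ((f i : Fin N) : ℕ) := by
  suffices h : ∀ n : ℕ, ∀ i : Fin c, (i : ℕ) ≤ n → (i : ℕ) ≤ ((f i : Fin N) : ℕ) from
    h (i : ℕ) i le_rfl
  intro n
  induction n with
  | zero => intro i hi; omega
  | succ n ih =>
    intro i hi
    rcases Nat.lt_or_ge (i : ℕ) (n + 1) with h | h
    · exact ih i (by omega)
    · have hpos : 0 < (i : ℕ) := by omega
      obtain ⟨i', hi'⟩ : ∃ i' : Fin c, (i' : ℕ) = (i : ℕ) - 1 :=
        ⟨⟨(i : ℕ) - 1, by omega⟩, rfl⟩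
      have h1 : ((i' : ℕ)) ≤ ((f i' : Fin N) : ℕ) := ih i' (by omega)
      have h2 : (f i' : Fin N) < f i := f.strictMono (by rw [Fin.lt_def]; omega)
      rw [Fin.lt_def] at h2
      omega

/-- any `c`-subset sum is at most the sum of the first `c` entries of an antitone vector -/
lemma sum_subset_le_psum {y : Fin N → ℝ} (hy : Antitone y) {B : Finset (Fin N)} {c : ℕ}
    (hB : B.card = c) : ∑ i ∈ B, y i ≤ psum y c := by
  classical
  have hcN : c ≤ N := by
    rw [← hB]
    calc B.card ≤ (univ : Finset (Fin N)).card := card_le_card (subset_univ B)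
    _ = N := by simp
  set f := B.orderEmbOfFin hB with hf
  have hBmap : B = univ.map f.toEmbedding := by
    ext b
    simp only [mem_map, mem_univ, true_and]
    constructor
    · intro hb
      have : b ∈ Set.range f := by rw [Finset.range_orderEmbOfFin]; exact hb
      obtain ⟨i, hi⟩ := this
      exact ⟨i, hi⟩
    · rintro ⟨i, rfl⟩
      exact Finset.orderEmbOfFin_mem B hB i
  have hfilter : univ.filter (fun i : Fin N => (i : ℕ) < c) =
      univ.map (Fin.castLEEmb hcN) := by
    ext i
    simp only [mem_filter, mem_univ, true_and, mem_map, Fin.castLEEmb]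
    constructor
    · intro hi; exact ⟨⟨(i : ℕ), hi⟩, by simp [Fin.castLE, Fin.ext_iff]⟩
    · rintro ⟨a, rfl⟩; simpa using a.2
  rw [hBmap, Finset.sum_map, psum, hfilter, Finset.sum_map]
  apply Finset.sum_le_sum
  intro i _
  apply hy
  rw [Fin.le_def]
  simpa using le_apply_of_orderEmb f i

/-- elementary symmetric sum over a subset of coordinates -/
noncomputable def gS (y : Fin N → ℝ) (s : Finset (Fin N)) (k : ℕ) : ℝ :=
  ∑ J ∈ s.powersetCard k, ∏ j ∈ J, y j

lemma gS_zero (y : Fin N → ℝ) (s : Finset (Fin N)) : gS y s 0 = 1 := by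
  simp [gS]

lemma gS_nonneg {y : Fin N → ℝ} {s : Finset (Fin N)} (hy : ∀ i ∈ s, 0 ≤ y i) (k : ℕ) :
    0 ≤ gS y s k := by
  apply Finset.sum_nonneg
  intro J hJ
  rw [Finset.mem_powersetCard] at hJ
  exact Finset.prod_nonneg fun i hi => hy i (hJ.1 hi)

lemma gS_congr {y z : Fin N → ℝ} {s : Finset (Fin N)} (h : ∀ i ∈ s, y i = z i) (k : ℕ) :
    gS y s k = gS z s k := by
  apply Finset.sum_congr rfl
  intro J hJ
  rw [Finset.mem_powersetCard] at hJ
  exact Finset.prod_congr rfl fun i hi => h i (hJ.1 hi)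

lemma gS_insert {y : Fin N → ℝ} {a : Fin N} {s : Finset (Fin N)} (ha : a ∉ s) (k : ℕ) :
    gS y (insert a s) (k + 1) = gS y s (k + 1) + y a * gS y s k := by
  classical
  have hinj : ∀ J ∈ s.powersetCard k, ∀ K ∈ s.powersetCard k,
      insert a J = insert a K → J = K := by
    intro J hJ K hK hJK
    rw [Finset.mem_powersetCard] at hJ hK
    have haJ : a ∉ J := fun h => ha (hJ.1 h)
    have haK : a ∉ K := fun h => ha (hK.1 h)
    have := congrArg (fun S => Finset.erase S a) hJK
    simpa [Finset.erase_insert haJ, Finset.erase_insert haK] using this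
  have hdisj : Disjoint (s.powersetCard (k + 1))
      ((s.powersetCard k).image (insert a)) := by
    rw [Finset.disjoint_right]
    intro J hJ hJ2
    rw [Finset.mem_image] at hJ
    obtain ⟨K, hK, rfl⟩ := hJ
    rw [Finset.mem_powersetCard] at hJ2
    exact ha (hJ2.1 (Finset.mem_insert_self a K))
  simp only [gS]
  rw [Finset.powersetCard_succ_insert ha, Finset.sum_union hdisj,
    Finset.sum_image hinj, Finset.mul_sum]
  congr 1
  apply Finset.sum_congr rfl
  intro J hJ
  rw [Finset.mem_powersetCard] at hJ
  rw [Finset.prod_insert (fun h => ha (hJ.1 h))]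

lemma esymmFin_eq_gS (y : Fin N → ℝ) (k : ℕ) : esymmFin y k = gS y univ k := rfl

/-- Robin Hood move increases `e_k` -/
lemma robinhood {j l : Fin N} (hjl : j ≠ l) {y y' : Fin N → ℝ}
    (hy : ∀ i, 0 ≤ y i)
    (hagree : ∀ i, i ≠ j → i ≠ l → y i = y' i)
    (hsum : y j + y l = y' j + y' l) (hprod : y j * y l ≤ y' j * y' l) (k : ℕ) :
    esymmFin y k ≤ esymmFin y' k := by
  classical
  set s : Finset (Fin N) := (univ.erase j).erase l with hs
  have hls : l ∉ s := Finset.notMem_erase l _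
  have hjs : j ∉ insert l s := by
    simp only [Finset.mem_insert, hs]
    push_neg
    exact ⟨hjl, fun h => (Finset.notMem_erase j univ) (Finset.mem_of_mem_erase h)⟩
  have huniv : (univ : Finset (Fin N)) = insert j (insert l s) := by
    rw [hs, Finset.insert_erase (Finset.mem_erase.2 ⟨Ne.symm hjl, mem_univ l⟩),
      Finset.insert_erase (mem_univ j)]
  have hmem : ∀ i ∈ s, i ≠ j ∧ i ≠ l := by
    intro i hi
    rw [hs, Finset.mem_erase, Finset.mem_erase] at hi
    exact ⟨hi.2.1, hi.1⟩
  have hcg : ∀ m : ℕ, gS y s m = gS y' s m :=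
    fun m => gS_congr (fun i hi => hagree i (hmem i hi).1 (hmem i hi).2) m
  have hsnn : ∀ i ∈ s, 0 ≤ y i := fun i _ => hy i
  match k with
  | 0 => rw [esymmFin_eq_gS, esymmFin_eq_gS, gS_zero, gS_zero]
  | 1 =>
    rw [esymmFin_eq_gS, esymmFin_eq_gS, huniv]
    rw [show (1 : ℕ) = 0 + 1 from rfl, gS_insert (y := y) hjs, gS_insert (y := y) hls,
      gS_insert (y := y') hjs, gS_insert (y := y') hls]
    simp only [gS_zero]
    rw [hcg 1]
    linarith [hsum]
  | (m + 1 + 1) =>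
    rw [esymmFin_eq_gS, esymmFin_eq_gS, huniv]
    rw [gS_insert (y := y) hjs, gS_insert (y := y) hls, gS_insert (y := y) hls,
      gS_insert (y := y') hjs, gS_insert (y := y') hls, gS_insert (y := y') hls]
    rw [hcg (m + 1 + 1), hcg (m + 1), hcg m]
    have hC : 0 ≤ gS y' s m := by
      rw [← hcg m]; exact gS_nonneg hsnn m
    have hC1 : 0 ≤ gS y' s (m + 1) := by
      rw [← hcg (m + 1)]; exact gS_nonneg hsnn (m + 1)
    have key := mul_le_mul_of_nonneg_right hprod hC
    have hsum' : (y j + y l) * gS y' s (m + 1) = (y' j + y' l) * gS y' s (m + 1) := by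
      rw [hsum]
    nlinarith [key, hsum']

lemma esymmFin_comp_perm (x : Fin N → ℝ) (σ : Equiv.Perm (Fin N)) (k : ℕ) :
    esymmFin (x ∘ σ) k = esymmFin x k := by
  show ∑ J ∈ Finset.univ.powersetCard k, ∏ j ∈ J, (x ∘ σ) j
      = ∑ J ∈ Finset.univ.powersetCard k, ∏ j ∈ J, x j
  rw [← Finset.esymm_map_val, ← Finset.esymm_map_val]
  congr 1
  have h1 : (univ : Finset (Fin N)).val.map (x ∘ σ) =
      ((univ.map σ.toEmbedding).val).map x := by
    rw [Finset.map_val, Multiset.map_map]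
    rfl
  rw [h1, Finset.map_univ_equiv]

/-- main induction: sorted case -/
lemma sorted_main (k : ℕ) (d : ℕ) :
    ∀ x y : Fin N → ℝ, Antitone x → Antitone y →
    (∀ i, 0 ≤ x i) → (∀ i, 0 ≤ y i) →
    (∀ m, psum x m ≤ psum y m) → (∑ i, x i = ∑ i, y i) →
    (univ.filter (fun i => x i ≠ y i)).card ≤ d →
    esymmFin y k ≤ esymmFin x k := by
  classical
  induction d with
  | zero =>
    intro x y _ _ _ _ _ _ hcard
    have hxy : x = y := by
      funext i
      by_contra hne
      have : i ∈ univ.filter (fun i => x i ≠ y i) := by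
        simp only [mem_filter, mem_univ, true_and]; exact hne
      have := Finset.card_pos.2 ⟨i, this⟩
      omega
    rw [hxy]
  | succ d ih =>
    intro x y hax hay hx hy hps hts hcard
    by_cases hall : ∀ i, x i = y i
    · have hxy : x = y := funext hall
      rw [hxy]
    · push_neg at hall
      -- find j : the largest index with x j < y j
      have hex : (univ.filter (fun i => x i < y i)).Nonempty := by
        by_contra hne
        rw [Finset.not_nonempty_iff_eq_empty, Finset.filter_eq_empty_iff] at hne
        have hle : ∀ i ∈ (univ : Finset (Fin N)), y i ≤ x i := by
          intro i _
          exact not_lt.1 (hne (mem_univ i))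
        obtain ⟨i0, hi0⟩ := hall
        have hlt : y i0 < x i0 := lt_of_le_of_ne (hle i0 (mem_univ i0)) (Ne.symm hi0)
        have : ∑ i, y i < ∑ i, x i :=
          Finset.sum_lt_sum hle ⟨i0, mem_univ i0, hlt⟩
        linarith [hts]
      set j := (univ.filter (fun i => x i < y i)).max' hex with hjdef
      have hj : x j < y j := by
        have hmem := (univ.filter (fun i => x i < y i)).max'_mem hex
        rw [← hjdef] at hmem
        exact (Finset.mem_filter.1 hmem).2
      have hjmax : ∀ i, j < i → ¬ x i < y i := by
        intro i hi hlt
        have : i ≤ j := Finset.le_max' _ i (by simpa using hlt)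
        exact absurd hi (not_lt.2 this)
      -- find l : the smallest index > j with y l < x l
      have hex2 : (univ.filter (fun i => j < i ∧ y i < x i)).Nonempty := by
        by_contra hne
        rw [Finset.not_nonempty_iff_eq_empty, Finset.filter_eq_empty_iff] at hne
        have hgt : ∀ i, j < i → x i ≤ y i := by
          intro i hi
          rcases le_or_gt (x i) (y i) with h | h
          · exact h
          · exact absurd ⟨hi, h⟩ (hne (mem_univ i))
        -- partial sums up to j strictly less, rest ≤, contradict equality
        have h1 : ∑ i ∈ univ.filter (fun i : Fin N => i ≤ j), x i <
            ∑ i ∈ univ.filter (fun i : Fin N => i ≤ j), y i := by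
          rw [filter_le_eq]
          have e1 : ∑ i ∈ univ.filter (fun i : Fin N => (i : ℕ) < (j : ℕ) + 1), x i
              = psum x ((j : ℕ) + 1) := rfl
          have e2 : ∑ i ∈ univ.filter (fun i : Fin N => (i : ℕ) < (j : ℕ) + 1), y i
              = psum y ((j : ℕ) + 1) := rfl
          rw [e1, e2, psum_succ_at, psum_succ_at]
          have := hps (j : ℕ)
          linarith
        have h2 : ∑ i ∈ univ.filter (fun i : Fin N => j < i), x i ≤
            ∑ i ∈ univ.filter (fun i : Fin N => j < i), y i := by
          apply Finset.sum_le_sum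
          intro i hi
          exact hgt i (by simpa using hi)
        rw [sum_le_split x j, sum_le_split y j] at hts
        linarith
      set l := (univ.filter (fun i => j < i ∧ y i < x i)).min' hex2 with hldef
      have hl : j < l ∧ y l < x l := by
        have hmem := (univ.filter (fun i => j < i ∧ y i < x i)).min'_mem hex2
        rw [← hldef] at hmem
        exact (Finset.mem_filter.1 hmem).2
      have hlmin : ∀ i, j < i → i < l → ¬ y i < x i := by
        intro i hji hil hlt
        have : l ≤ i := Finset.min'_le _ i (by simpa using ⟨hji, hlt⟩)
        exact absurd hil (not_lt.2 this)
      have hmid : ∀ i, j < i → i < l → x i = y i := by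
        intro i h1 h2
        rcases lt_trichotomy (x i) (y i) with h | h | h
        · exact absurd h (hjmax i h1)
        · exact h
        · exact absurd h (hlmin i h1 h2)
      have hjl : j ≠ l := ne_of_lt hl.1
      set t := min (y j - x j) (x l - y l) with htdef
      have ht : 0 < t := lt_min (by linarith [hj]) (by linarith [hl.2])
      have htj : t ≤ y j - x j := min_le_left _ _
      have htl : t ≤ x l - y l := min_le_right _ _
      set y' : Fin N → ℝ := fun i => if i = j then y j - t else if i = l then y l + t else y i
        with hy'def
      have hy'j : y' j = y j - t := by simp [hy'def]
      have hy'l : y' l = y l + t := by simp [hy'def, Ne.symm hjl]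
      have hy'i : ∀ i, i ≠ j → i ≠ l → y' i = y i := by
        intro i h1 h2; simp [hy'def, h1, h2]
      have hxjl : x l ≤ x j := hax (le_of_lt hl.1)
      have hb1 : x j ≤ y' j := by rw [hy'j]; linarith
      have hb2 : y' l ≤ x l := by rw [hy'l]; linarith
      have he : y' l ≤ y' j := le_trans hb2 (le_trans hxjl hb1)
      -- invariants
      have hy'nn : ∀ i, 0 ≤ y' i := by
        intro i
        by_cases h1 : i = j
        · rw [h1]; exact le_trans (hx j) hb1
        · by_cases h2 : i = l
          · rw [h2, hy'l]; linarith [hy l]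
          · rw [hy'i i h1 h2]; exact hy i
      have hay' : Antitone y' := by
        intro i1 i2 h12
        by_cases h2j : i2 = j
        · by_cases h1 : i1 = i2
          · rw [h1]
          · rw [h2j] at h12
            have hi1 : i1 < j := lt_of_le_of_ne h12 (fun h => h1 (h.trans h2j.symm))
            have h1j : i1 ≠ j := ne_of_lt hi1
            have h1l : i1 ≠ l := ne_of_lt (lt_trans hi1 hl.1)
            rw [h2j, hy'i i1 h1j h1l, hy'j]
            have : y j ≤ y i1 := hay (le_of_lt hi1)
            linarith [ht.le]
        · by_cases h2l : i2 = l
          · by_cases h1l : i1 = l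
            · rw [h1l, h2l]
            · rw [h2l] at h12
              have hi1 : i1 < l := lt_of_le_of_ne h12 h1l
              by_cases h1j : i1 = j
              · rw [h1j, h2l]; exact he
              · rw [h2l, hy'i i1 h1j h1l]
                rcases lt_or_ge j i1 with hji1 | hi1j
                · have hm := hmid i1 hji1 hi1
                  have hxx : x l ≤ x i1 := hax (le_of_lt hi1)
                  linarith [hb2]
                · have hi1j' : i1 < j := lt_of_le_of_ne hi1j h1j
                  have : y j ≤ y i1 := hay (le_of_lt hi1j')
                  linarith [hb2, hxjl, hj]
          · by_cases h1j : i1 = j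
            · rw [h1j] at h12
              have hji2 : j < i2 := lt_of_le_of_ne h12 (fun h => h2j h.symm)
              rw [h1j, hy'i i2 h2j h2l]
              rcases lt_or_ge i2 l with hi2l | hli2
              · have hm := hmid i2 hji2 hi2l
                have hxx : x i2 ≤ x j := hax (le_of_lt hji2)
                linarith [hb1]
              · have hli2' : l < i2 := lt_of_le_of_ne hli2 (fun h => h2l h.symm)
                have : y i2 ≤ y l := hay (le_of_lt hli2')
                linarith [he, hy'l, ht.le]
            · by_cases h1l : i1 = l
              · rw [h1l] at h12
                have hli2 : l < i2 := lt_of_le_of_ne h12 (fun h => h2l h.symm)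
                rw [h1l, hy'i i2 h2j h2l, hy'l]
                have : y i2 ≤ y l := hay (le_of_lt hli2)
                linarith [ht.le]
              · rw [hy'i i1 h1j h1l, hy'i i2 h2j h2l]
                exact hay h12
      have hcorr : ∀ s : Finset (Fin N), ∑ i ∈ s, y' i = (∑ i ∈ s, y i) +
          ((if j ∈ s then -t else 0) + (if l ∈ s then t else 0)) :=
        sum_corr hjl hy'j hy'l hy'i
      have hps' : ∀ m, psum x m ≤ psum y' m := by
        intro m
        have hcm := hcorr (univ.filter (fun i : Fin N => (i : ℕ) < m))
        have hjmem : j ∈ univ.filter (fun i : Fin N => (i : ℕ) < m) ↔ (j : ℕ) < m := by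
          simp
        have hlmem : l ∈ univ.filter (fun i : Fin N => (i : ℕ) < m) ↔ (l : ℕ) < m := by
          simp
        have hjlval : (j : ℕ) < (l : ℕ) := hl.1
        rcases le_or_gt m (j : ℕ) with hmj | hjm
        · -- m ≤ j : y' agrees with y below m
          have : psum y' m = psum y m := by
            rw [psum, psum, hcm, if_neg, if_neg]
            · ring
            · rw [hlmem]; omega
            · rw [hjmem]; omega
          rw [this]; exact hps m
        · rcases le_or_gt m (l : ℕ) with hml | hlm
          · -- j < m ≤ l
            have hpy' : psum y' m = psum y m - t := by
              rw [psum, psum, hcm, if_pos, if_neg]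
              · show psum y m + (-t + 0) = psum y m - t; ring
              · rw [hlmem]; omega
              · rw [hjmem]; omega
            rw [hpy']
            have hsx : psum x m = psum x ((j : ℕ) + 1) +
                ∑ i ∈ univ.filter (fun i : Fin N => (j : ℕ) + 1 ≤ (i : ℕ) ∧ (i : ℕ) < m), x i :=
              psum_split x (by omega)
            have hsy : psum y m = psum y ((j : ℕ) + 1) +
                ∑ i ∈ univ.filter (fun i : Fin N => (j : ℕ) + 1 ≤ (i : ℕ) ∧ (i : ℕ) < m), y i :=
              psum_split y (by omega)
            have hstrip : ∑ i ∈ univ.filter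
                  (fun i : Fin N => (j : ℕ) + 1 ≤ (i : ℕ) ∧ (i : ℕ) < m), x i =
                ∑ i ∈ univ.filter
                  (fun i : Fin N => (j : ℕ) + 1 ≤ (i : ℕ) ∧ (i : ℕ) < m), y i := by
              apply Finset.sum_congr rfl
              intro i hi
              simp only [mem_filter, mem_univ, true_and] at hi
              exact hmid i (by rw [Fin.lt_def]; omega) (by rw [Fin.lt_def]; omega)
            rw [hsx, hsy, hstrip, psum_succ_at, psum_succ_at]
            have := hps (j : ℕ)
            linarith
          · -- l < m
            have : psum y' m = psum y m := by
              rw [psum, psum, hcm, if_pos, if_pos]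
              · ring
              · rw [hlmem]; omega
              · rw [hjmem]; omega
            rw [this]; exact hps m
      have hts' : ∑ i, x i = ∑ i, y' i := by
        rw [hcorr univ, if_pos (mem_univ j), if_pos (mem_univ l)]
        rw [hts]; ring
      -- the differing set shrinks
      have hcard' : (univ.filter (fun i => x i ≠ y' i)).card ≤ d := by
        have hjD : j ∈ univ.filter (fun i => x i ≠ y i) := by
          simp only [mem_filter, mem_univ, true_and]; exact ne_of_lt hj
        have hlD : l ∈ univ.filter (fun i => x i ≠ y i) := by
          simp only [mem_filter, mem_univ, true_and]; exact (ne_of_lt hl.2).symm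
        rcases min_cases (y j - x j) (x l - y l) with ⟨hteq, _⟩ | ⟨hteq, _⟩
        · -- t = y j - x j, so y' j = x j
          have hfix : y' j = x j := by
            have ht2 : t = y j - x j := htdef.trans hteq
            rw [hy'j, ht2]; ring
          have hsub : univ.filter (fun i => x i ≠ y' i) ⊆
              (univ.filter (fun i => x i ≠ y i)).erase j := by
            intro i hi
            simp only [mem_filter, mem_univ, true_and] at hi
            rw [Finset.mem_erase]
            have hij : i ≠ j := by rintro rfl; exact hi hfix.symm
            refine ⟨hij, ?_⟩
            simp only [mem_filter, mem_univ, true_and]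
            rcases eq_or_ne i l with rfl | hil
            · exact (ne_of_lt hl.2).symm
            · rw [← hy'i i hij hil]; exact hi
          calc (univ.filter (fun i => x i ≠ y' i)).card
              ≤ ((univ.filter (fun i => x i ≠ y i)).erase j).card := card_le_card hsub
            _ = (univ.filter (fun i => x i ≠ y i)).card - 1 :=
                Finset.card_erase_of_mem hjD
            _ ≤ d := by omega
        · -- t = x l - y l, so y' l = x l
          have hfix : y' l = x l := by
            have ht2 : t = x l - y l := htdef.trans hteq
            rw [hy'l, ht2]; ring
          have hsub : univ.filter (fun i => x i ≠ y' i) ⊆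
              (univ.filter (fun i => x i ≠ y i)).erase l := by
            intro i hi
            simp only [mem_filter, mem_univ, true_and] at hi
            rw [Finset.mem_erase]
            have hil : i ≠ l := by rintro rfl; exact hi hfix.symm
            refine ⟨hil, ?_⟩
            simp only [mem_filter, mem_univ, true_and]
            rcases eq_or_ne i j with rfl | hij
            · exact ne_of_lt hj
            · rw [← hy'i i hij hil]; exact hi
          calc (univ.filter (fun i => x i ≠ y' i)).card
              ≤ ((univ.filter (fun i => x i ≠ y i)).erase l).card := card_le_card hsub
            _ = (univ.filter (fun i => x i ≠ y i)).card - 1 :=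
                Finset.card_erase_of_mem hlD
            _ ≤ d := by omega
      -- apply IH and Robin Hood
      have step1 : esymmFin y' k ≤ esymmFin x k :=
        ih x y' hax hay' hx hy'nn hps' hts' hcard'
      have step2 : esymmFin y k ≤ esymmFin y' k := by
        apply robinhood hjl hy (fun i h1 h2 => (hy'i i h1 h2).symm) _ _ k
        · rw [hy'j, hy'l]; ring
        · rw [hy'j, hy'l]
          have h2t : y l + t ≤ y j - t := by rw [← hy'j, ← hy'l]; exact he
          nlinarith [ht.le]
      linarith

end SchurAux


open SchurAux

/-- Schur-concavity of elementary symmetric polynomials on nonnegative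
vectors: if `x ≺ y` then `e_k(x) ≥ e_k(y)`. -/
theorem esymm_schur_concave {N : ℕ} (k : ℕ) (x y : Fin N → ℝ)
    (hx : ∀ i, 0 ≤ x i) (hy : ∀ i, 0 ≤ y i) (hmaj : Majorizes x y) :
    esymmFin y k ≤ esymmFin x k := by
  classical
  set σx : Equiv.Perm (Fin N) := Fin.revPerm.trans (Tuple.sort x) with hσx
  set σy : Equiv.Perm (Fin N) := Fin.revPerm.trans (Tuple.sort y) with hσy
  set x' : Fin N → ℝ := x ∘ σx with hx'
  set y' : Fin N → ℝ := y ∘ σy with hy'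
  have hax' : Antitone x' := by
    intro a b hab
    exact Tuple.monotone_sort x (Fin.rev_le_rev.mpr hab)
  have hay' : Antitone y' := by
    intro a b hab
    exact Tuple.monotone_sort y (Fin.rev_le_rev.mpr hab)
  have hx'nn : ∀ i, 0 ≤ x' i := fun i => hx _
  have hy'nn : ∀ i, 0 ≤ y' i := fun i => hy _
  have hps : ∀ m, SchurAux.psum x' m ≤ SchurAux.psum y' m := by
    intro m
    set F := univ.filter (fun i : Fin N => (i : ℕ) < m) with hF
    set A := F.image σx with hA
    have hAx : ∑ i ∈ A, x i = ∑ i ∈ F, x (σx i) :=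
      Finset.sum_image (fun a _ b _ h => σx.injective h)
    have hAcard : A.card = F.card := Finset.card_image_of_injective F σx.injective
    obtain ⟨B, hBcard, hle⟩ := hmaj.1 A
    set B' := B.image σy.symm with hB'
    have hB'card : B'.card = B.card := Finset.card_image_of_injective B σy.symm.injective
    have hBy : ∑ i ∈ B', y' i = ∑ i ∈ B, y i := by
      rw [hB', Finset.sum_image (fun a _ b _ h => σy.symm.injective h)]
      apply Finset.sum_congr rfl
      intro i _
      show y (σy (σy.symm i)) = y i
      rw [Equiv.apply_symm_apply]
    have hFm : F.card ≤ m := by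
      have : F.card ≤ (Finset.range m).card :=
        Finset.card_le_card_of_injOn (fun i : Fin N => (i : ℕ))
          (fun i hi => by simpa [hF] using hi)
          (fun a _ b _ h => Fin.val_injective h)
      simpa using this
    have step : ∑ i ∈ B', y' i ≤ SchurAux.psum y' B'.card :=
      sum_subset_le_psum hay' rfl
    have hpsx : SchurAux.psum x' m = ∑ i ∈ A, x i := by
      rw [SchurAux.psum, hAx]
      rfl
    calc SchurAux.psum x' m = ∑ i ∈ A, x i := hpsx
      _ ≤ ∑ i ∈ B, y i := hle
      _ = ∑ i ∈ B', y' i := hBy.symm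
      _ ≤ SchurAux.psum y' B'.card := step
      _ ≤ SchurAux.psum y' m := by
          apply psum_mono y' hy'nn
          rw [hB'card, hBcard, hAcard]
          exact hFm
  have hts : ∑ i, x' i = ∑ i, y' i := by
    have e1 : ∑ i, x' i = ∑ i, x i := Equiv.sum_comp σx x
    have e2 : ∑ i, y' i = ∑ i, y i := Equiv.sum_comp σy y
    rw [e1, e2]; exact hmaj.2
  have hcard : (univ.filter (fun i => x' i ≠ y' i)).card ≤ N := by
    calc (univ.filter (fun i => x' i ≠ y' i)).card ≤ (univ : Finset (Fin N)).card :=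
          Finset.card_filter_le _ _
      _ = N := by simp
  have main := sorted_main k N x' y' hax' hay' hx'nn hy'nn hps hts hcard
  rw [hx', hy', esymmFin_comp_perm x σx k, esymmFin_comp_perm y σy k] at main
  exact main
end

section
/- Let λ_1, ..., λ_N be nonnegative reals sorted in decreasing order, M < N, and Λ = ∑_{n=M+1}^N λ_n. Then e_k(λ_1, ..., λ_N) ≤ ∑_{j=0}^k (Λ^j / j!) e_{k−j}(λ_1, ..., λ_M). -/
/-- The `k`-th elementary symmetric polynomial of `λ_1, ..., λ_m`
(indices `0, ..., m-1`). -/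
def esymm (lam : ℕ → ℝ) (m k : ℕ) : ℝ :=
  ∑ J ∈ (Finset.range m).powersetCard k, ∏ j ∈ J, lam j


open Finset

noncomputable def E (f : ℕ → ℝ) (s : Finset ℕ) (k : ℕ) : ℝ :=
  ∑ J ∈ s.powersetCard k, ∏ j ∈ J, f j

lemma E_zero (f : ℕ → ℝ) (s : Finset ℕ) : E f s 0 = 1 := by
  simp [E]

lemma E_nonneg (f : ℕ → ℝ) (hf : ∀ n, 0 ≤ f n) (s : Finset ℕ) (k : ℕ) : 0 ≤ E f s k :=
  Finset.sum_nonneg fun J _ => Finset.prod_nonneg fun j _ => hf j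

lemma E_insert (f : ℕ → ℝ) {a : ℕ} {s : Finset ℕ} (ha : a ∉ s) (k : ℕ) :
    E f (insert a s) (k + 1) = E f s (k + 1) + f a * E f s k := by
  rw [E, Finset.powersetCard_succ_insert ha, Finset.sum_union, Finset.sum_image]
  · rw [E, E, Finset.mul_sum]
    congr 1
    refine Finset.sum_congr rfl fun J hJ => ?_
    rw [Finset.prod_insert fun h => ha ((Finset.mem_powersetCard.1 hJ).1 h)]
  · intro x hx y hy hxy
    have hxa : a ∉ x := fun h => ha ((Finset.mem_powersetCard.1 hx).1 h)
    have hya : a ∉ y := fun h => ha ((Finset.mem_powersetCard.1 hy).1 h)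
    rw [← Finset.erase_insert hxa, ← Finset.erase_insert hya, hxy]
  · rw [Finset.disjoint_left]
    intro J hJ hJ'
    obtain ⟨t, ht, rfl⟩ := Finset.mem_image.1 hJ'
    exact ha ((Finset.mem_powersetCard.1 hJ).1 (Finset.mem_insert_self a t))

lemma E_empty_succ (f : ℕ → ℝ) (k : ℕ) : E f ∅ (k + 1) = 0 := by
  rw [E, Finset.powersetCard_eq_empty.2 (by simp), Finset.sum_empty]

lemma E_union (f : ℕ → ℝ) (s t : Finset ℕ) (hd : Disjoint s t) :
    ∀ k, E f (s ∪ t) k = ∑ j ∈ Finset.range (k + 1), E f s (k - j) * E f t j := by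
  classical
  induction t using Finset.induction_on with
  | empty =>
    intro k
    rw [Finset.union_empty, Finset.sum_range_succ']
    simp only [E_zero, mul_one, Nat.sub_zero]
    have : ∀ j ∈ Finset.range k, E f s (k - (j + 1)) * E f ∅ (j + 1) = 0 := by
      intro j _; rw [E_empty_succ, mul_zero]
    rw [Finset.sum_congr rfl this, Finset.sum_const_zero, zero_add]
  | @insert a t ha ih =>
    intro k
    have hds : Disjoint s t := hd.mono_right (Finset.subset_insert a t)
    have hast : a ∉ s ∪ t := by
      simp only [Finset.mem_union, not_or]
      exact ⟨fun h => (Finset.disjoint_left.1 hd) h (Finset.mem_insert_self a t), ha⟩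
    have hkey : s ∪ insert a t = insert a (s ∪ t) := by
      ext x; simp [or_comm, or_left_comm, or_assoc]
    match k with
    | 0 => simp [E_zero]
    | m + 1 =>
      rw [hkey, E_insert f hast, ih hds (m + 1), ih hds m]
      rw [Finset.sum_range_succ' (fun j => E f s (m + 1 - j) * E f (insert a t) j) (m + 1)]
      rw [Finset.sum_range_succ' (fun j => E f s (m + 1 - j) * E f t j) (m + 1)]
      simp only [Nat.sub_zero, E_zero, mul_one, Nat.succ_sub_succ]
      have : ∀ j ∈ Finset.range (m + 1),
          E f s (m - j) * E f (insert a t) (j + 1)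
            = E f s (m - j) * E f t (j + 1) + f a * (E f s (m - j) * E f t j) := by
        intro j _
        rw [E_insert f ha j]
        ring
      rw [Finset.sum_congr rfl this, Finset.sum_add_distrib, ← Finset.mul_sum]
      ring

lemma pow_aux (S a : ℝ) (hS : 0 ≤ S) (ha : 0 ≤ a) :
    ∀ m : ℕ, S ^ (m + 1) + (m + 1 : ℝ) * a * S ^ m ≤ (S + a) ^ (m + 1) := by
  intro m
  induction m with
  | zero => simp
  | succ m ih =>
    have hpow : 0 ≤ S ^ m := pow_nonneg hS m
    have h5 : 0 ≤ ((m : ℝ) + 1) * a * a * S ^ m := by positivity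
    calc S ^ (m + 1 + 1) + ((m + 1 : ℕ) + 1 : ℝ) * a * S ^ (m + 1)
        ≤ (S + a) * (S ^ (m + 1) + (m + 1 : ℝ) * a * S ^ m) := by
          have hexp : (S + a) * (S ^ (m + 1) + ((m : ℝ) + 1) * a * S ^ m)
              = S ^ (m + 1 + 1) + ((m : ℝ) + 1 + 1) * a * S ^ (m + 1)
                + ((m : ℝ) + 1) * a * a * S ^ m := by ring
          push_cast
          linarith [h5, hexp.ge]
      _ ≤ (S + a) * (S + a) ^ (m + 1) := by
          apply mul_le_mul_of_nonneg_left ih (by linarith)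
      _ = (S + a) ^ (m + 2) := by ring

lemma E_le (f : ℕ → ℝ) (hf : ∀ n, 0 ≤ f n) (t : Finset ℕ) :
    ∀ j, E f t j ≤ (∑ i ∈ t, f i) ^ j / (j.factorial : ℝ) := by
  classical
  induction t using Finset.induction_on with
  | empty =>
    intro j
    match j with
    | 0 => simp [E_zero]
    | m + 1 =>
      rw [E_empty_succ]
      positivity
  | @insert a t ha ih =>
    intro j
    match j with
    | 0 => simp [E_zero]
    | m + 1 =>
      set S := ∑ i ∈ t, f i with hSdeF
      have hS : 0 ≤ S := Finset.sum_nonneg fun i _ => hf i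
      rw [E_insert f ha m, Finset.sum_insert ha]
      have h1 := ih (m + 1)
      have h2 := ih m
      have h3 : f a * E f t m ≤ f a * (S ^ m / (m.factorial : ℝ)) :=
        mul_le_mul_of_nonneg_left h2 (hf a)
      have hfac : ((m + 1).factorial : ℝ) = (m + 1 : ℝ) * (m.factorial : ℝ) := by
        rw [Nat.factorial_succ]; push_cast; ring
      have hfacpos : (0 : ℝ) < (m.factorial : ℝ) := by positivity
      have key : S ^ (m + 1) / ((m + 1).factorial : ℝ)
            + f a * (S ^ m / (m.factorial : ℝ))
          ≤ (f a + S) ^ (m + 1) / ((m + 1).factorial : ℝ) := by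
        have := pow_aux S (f a) hS (hf a) m
        have h4 : S ^ (m + 1) + (m + 1 : ℝ) * f a * S ^ m ≤ (f a + S) ^ (m + 1) := by
          rw [add_comm (f a) S]; exact this
        rw [hfac]
        have hgoal : S ^ (m + 1) / (((m : ℝ) + 1) * (m.factorial : ℝ))
            + f a * (S ^ m / (m.factorial : ℝ))
            = (S ^ (m + 1) + ((m : ℝ) + 1) * f a * S ^ m)
              / (((m : ℝ) + 1) * (m.factorial : ℝ)) := by
          field_simp
        rw [hgoal]
        gcongr
      linarith

/-- Proposition 2 (finite version): for nonnegative `λ_1 ≥ ... ≥ λ_N`, `M < N`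
and `Λ = ∑_{n=M+1}^N λ_n`,
`e_k(λ_1,...,λ_N) ≤ ∑_{j=0}^k (Λ^j / j!) e_{k−j}(λ_1,...,λ_M)`. -/
theorem esymm_le_tail_bound (N M k : ℕ) (hMN : M < N) (lam : ℕ → ℝ)
    (hpos : ∀ n, 0 ≤ lam n)
    (hsorted : ∀ i j, i ≤ j → j < N → lam j ≤ lam i)
    (Λ : ℝ) (hΛ : Λ = ∑ n ∈ Finset.Ico M N, lam n) :
    esymm lam N k ≤
      ∑ j ∈ Finset.range (k + 1), Λ ^ j / (j.factorial : ℝ) * esymm lam M (k - j) := by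
  have hE : esymm lam N k = E lam (Finset.range N) k := rfl
  have hunion : Finset.range N = Finset.range M ∪ Finset.Ico M N := by
    rw [Finset.range_eq_Ico, Finset.range_eq_Ico]
    exact (Finset.Ico_union_Ico_eq_Ico (Nat.zero_le M) hMN.le).symm
  have hdisj : Disjoint (Finset.range M) (Finset.Ico M N) :=
    Finset.disjoint_left.2 fun x hx hx' => by
      rw [Finset.mem_range] at hx
      rw [Finset.mem_Ico] at hx'
      omega
  rw [hE, hunion, E_union lam _ _ hdisj k]
  apply Finset.sum_le_sum
  intro j hj
  have h1 : E lam (Finset.Ico M N) j ≤ Λ ^ j / (j.factorial : ℝ) := by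
    rw [hΛ]
    exact E_le lam hpos _ j
  have h2 : 0 ≤ E lam (Finset.range M) (k - j) := E_nonneg lam hpos _ _
  calc E lam (Finset.range M) (k - j) * E lam (Finset.Ico M N) j
      ≤ E lam (Finset.range M) (k - j) * (Λ ^ j / (j.factorial : ℝ)) :=
        mul_le_mul_of_nonneg_left h1 h2
    _ = Λ ^ j / (j.factorial : ℝ) * esymm lam M (k - j) := by
        rw [mul_comm]; rfl
end

section
/- Let (λ_n)_{n≥1} be a nonnegative summable sequence sorted in decreasing order with tail sum Λ_M = ∑_{n=M+1}^∞ λ_n. Then e_k(λ_1, λ_2, ...) ≤ ∑_{j=0}^k (Λ_M^j / j!) e_{k−j}(λ_1, ..., λ_M), where e_k of the infinite sequence is the supremum of e_k over finite truncations. -/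
open Finset

/-- Lemma B: `(j+1) e_{j+1}(s) ≤ (∑ s) e_j(s)` for nonnegative `f`. -/
lemma step_le (s : Finset ℕ) (f : ℕ → ℝ) (hf : ∀ i, 0 ≤ f i) (j : ℕ) :
    ((j : ℝ) + 1) * ∑ C ∈ s.powersetCard (j + 1), ∏ i ∈ C, f i ≤
      (∑ i ∈ s, f i) * ∑ B ∈ s.powersetCard j, ∏ i ∈ B, f i := by
  classical
  have hL : ((j : ℝ) + 1) * ∑ C ∈ s.powersetCard (j + 1), ∏ i ∈ C, f i
      = ∑ p ∈ (s.powersetCard (j + 1)).sigma (fun C => C),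
          f p.2 * ∏ i ∈ p.1.erase p.2, f i := by
    rw [Finset.mul_sum, Finset.sum_sigma]
    refine Finset.sum_congr rfl fun C hC => ?_
    have hcard : C.card = j + 1 := (Finset.mem_powersetCard.1 hC).2
    calc ((j : ℝ) + 1) * ∏ i ∈ C, f i = ∑ _i ∈ C, ∏ i ∈ C, f i := by
          rw [Finset.sum_const, hcard]; push_cast; ring
      _ = ∑ i ∈ C, f i * ∏ x ∈ C.erase i, f x :=
          Finset.sum_congr rfl fun i hi => (Finset.mul_prod_erase C f hi).symm
  have hR : (∑ i ∈ s, f i) * ∑ B ∈ s.powersetCard j, ∏ i ∈ B, f i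
      = ∑ p ∈ s ×ˢ s.powersetCard j, f p.1 * ∏ i ∈ p.2, f i := by
    rw [Finset.sum_mul_sum, Finset.sum_product]
  rw [hL, hR]
  have himg : ∑ p ∈ (s.powersetCard (j + 1)).sigma (fun C => C),
      f p.2 * ∏ i ∈ p.1.erase p.2, f i
      = ∑ q ∈ ((s.powersetCard (j + 1)).sigma (fun C => C)).image
          (fun p => (p.2, p.1.erase p.2)), f q.1 * ∏ i ∈ q.2, f i := by
    rw [Finset.sum_image]
    rintro ⟨C, i⟩ hp ⟨D, l⟩ hq hpq
    have h1 : i = l := congrArg Prod.fst hpq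
    have h2 : C.erase i = D.erase l := congrArg Prod.snd hpq
    have hp2 : i ∈ C := (Finset.mem_sigma.1 hp).2
    have hq2 : l ∈ D := (Finset.mem_sigma.1 hq).2
    subst h1
    have h3 : C = D := by
      rw [← Finset.insert_erase hp2, ← Finset.insert_erase hq2, h2]
    subst h3
    rfl
  rw [himg]
  apply Finset.sum_le_sum_of_subset_of_nonneg
  · intro q hq
    obtain ⟨p, hp, rfl⟩ := Finset.mem_image.1 hq
    obtain ⟨hC, hp2⟩ := Finset.mem_sigma.1 hp
    obtain ⟨hCs, hcard⟩ := Finset.mem_powersetCard.1 hC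
    refine Finset.mem_product.2 ⟨hCs hp2, Finset.mem_powersetCard.2
      ⟨fun x hx => hCs (Finset.erase_subset _ _ hx), ?_⟩⟩
    rw [Finset.card_erase_of_mem hp2, hcard]; rfl
  · intro q _ _
    exact mul_nonneg (hf _) (Finset.prod_nonneg fun i _ => hf i)

/-- Lemma A: `j! e_j(s) ≤ (∑ s)^j` for nonnegative `f`. -/
lemma esymm_finset_le (s : Finset ℕ) (f : ℕ → ℝ) (hf : ∀ i, 0 ≤ f i) (j : ℕ) :
    (j.factorial : ℝ) * ∑ B ∈ s.powersetCard j, ∏ i ∈ B, f i ≤ (∑ i ∈ s, f i) ^ j := by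
  induction j with
  | zero => simp
  | succ j ih =>
    have hsum0 : 0 ≤ ∑ i ∈ s, f i := Finset.sum_nonneg fun i _ => hf i
    have hfac : (0 : ℝ) ≤ (j.factorial : ℝ) := by positivity
    calc ((j + 1).factorial : ℝ) * ∑ B ∈ s.powersetCard (j + 1), ∏ i ∈ B, f i
        = (j.factorial : ℝ) * (((j : ℝ) + 1) * ∑ B ∈ s.powersetCard (j + 1), ∏ i ∈ B, f i) := by
          rw [Nat.factorial_succ]; push_cast; ring
      _ ≤ (j.factorial : ℝ) * ((∑ i ∈ s, f i) * ∑ B ∈ s.powersetCard j, ∏ i ∈ B, f i) :=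
          mul_le_mul_of_nonneg_left (step_le s f hf j) hfac
      _ = (∑ i ∈ s, f i) * ((j.factorial : ℝ) * ∑ B ∈ s.powersetCard j, ∏ i ∈ B, f i) := by ring
      _ ≤ (∑ i ∈ s, f i) * (∑ i ∈ s, f i) ^ j := mul_le_mul_of_nonneg_left ih hsum0
      _ = (∑ i ∈ s, f i) ^ (j + 1) := by ring

/-- Splitting identity: `e_k(range N) = ∑_j e_{k-j}(range M) * e_j(Ico M N)` for `M ≤ N`. -/
lemma esymm_split (M N k : ℕ) (f : ℕ → ℝ) (h : M ≤ N) :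
    (∑ J ∈ (Finset.range N).powersetCard k, ∏ i ∈ J, f i) =
      ∑ j ∈ Finset.range (k + 1),
        (∑ A ∈ (Finset.range M).powersetCard (k - j), ∏ i ∈ A, f i) *
        (∑ B ∈ (Finset.Ico M N).powersetCard j, ∏ i ∈ B, f i) := by
  classical
  have hRHS : ∑ j ∈ Finset.range (k + 1),
        (∑ A ∈ (Finset.range M).powersetCard (k - j), ∏ i ∈ A, f i) *
        (∑ B ∈ (Finset.Ico M N).powersetCard j, ∏ i ∈ B, f i)
      = ∑ p ∈ (Finset.range (k + 1)).sigma
          (fun j => (Finset.range M).powersetCard (k - j) ×ˢ (Finset.Ico M N).powersetCard j),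
          (∏ i ∈ p.2.1, f i) * ∏ i ∈ p.2.2, f i := by
    rw [Finset.sum_sigma]
    exact Finset.sum_congr rfl fun j _ => by rw [Finset.sum_mul_sum, Finset.sum_product]
  rw [hRHS]
  refine Finset.sum_nbij'
    (fun J => ⟨(J \ Finset.range M).card, (J ∩ Finset.range M, J \ Finset.range M)⟩)
    (fun p => p.2.1 ∪ p.2.2) ?_ ?_ ?_ ?_ ?_
  · intro J hJ
    obtain ⟨hJs, hJc⟩ := Finset.mem_powersetCard.1 hJ
    have hdle : (J \ Finset.range M).card ≤ k := by
      rw [← hJc]; exact Finset.card_le_card (Finset.sdiff_subset)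
    simp only [Finset.mem_sigma, Finset.mem_product, Finset.mem_powersetCard,
      Finset.mem_range]
    refine ⟨Nat.lt_succ_of_le hdle, ⟨Finset.inter_subset_right, ?_⟩, ?_, trivial⟩
    · have := Finset.card_inter_add_card_sdiff J (Finset.range M)
      omega
    · intro x hx
      obtain ⟨hxJ, hxM⟩ := Finset.mem_sdiff.1 hx
      exact Finset.mem_Ico.2 ⟨Nat.le_of_not_lt (fun hc => hxM (Finset.mem_range.2 hc)),
        Finset.mem_range.1 (hJs hxJ)⟩
  · intro p hp
    obtain ⟨hj, hAB⟩ := Finset.mem_sigma.1 hp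
    obtain ⟨hA, hB⟩ := Finset.mem_product.1 hAB
    obtain ⟨hAs, hAc⟩ := Finset.mem_powersetCard.1 hA
    obtain ⟨hBs, hBc⟩ := Finset.mem_powersetCard.1 hB
    have hdisj : Disjoint p.2.1 p.2.2 := by
      refine Finset.disjoint_left.2 fun x hx1 hx2 => ?_
      have := Finset.mem_range.1 (hAs hx1)
      have := (Finset.mem_Ico.1 (hBs hx2)).1
      omega
    refine Finset.mem_powersetCard.2 ⟨?_, ?_⟩
    · intro x hx
      rcases Finset.mem_union.1 hx with hx | hx
      · exact Finset.mem_range.2 (lt_of_lt_of_le (Finset.mem_range.1 (hAs hx)) h)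
      · exact Finset.mem_range.2 (Finset.mem_Ico.1 (hBs hx)).2
    · rw [Finset.card_union_of_disjoint hdisj, hAc, hBc]
      have := Finset.mem_range.1 hj
      omega
  · intro J hJ
    simp only
    exact sup_inf_sdiff J (Finset.range M)
  · intro p hp
    obtain ⟨hj, hAB⟩ := Finset.mem_sigma.1 hp
    obtain ⟨hA, hB⟩ := Finset.mem_product.1 hAB
    obtain ⟨hAs, hAc⟩ := Finset.mem_powersetCard.1 hA
    obtain ⟨hBs, hBc⟩ := Finset.mem_powersetCard.1 hB
    have hBM : Disjoint p.2.2 (Finset.range M) := by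
      refine Finset.disjoint_left.2 fun x hx1 hx2 => ?_
      have := (Finset.mem_Ico.1 (hBs hx1)).1
      have := Finset.mem_range.1 hx2
      omega
    have h1 : (p.2.1 ∪ p.2.2) ∩ Finset.range M = p.2.1 := by
      rw [Finset.union_inter_distrib_right, Finset.inter_eq_left.2 hAs,
        Finset.disjoint_iff_inter_eq_empty.1 hBM, Finset.union_empty]
    have h2 : (p.2.1 ∪ p.2.2) \ Finset.range M = p.2.2 := by
      rw [Finset.union_sdiff_distrib, Finset.sdiff_eq_empty_iff_subset.2 hAs,
        Finset.sdiff_eq_self_iff_disjoint.2 hBM, Finset.empty_union]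
    have hcard : ((p.2.1 ∪ p.2.2) \ Finset.range M).card = p.1 := by rw [h2, hBc]
    obtain ⟨j, A, B⟩ := p
    exact Sigma.ext hcard (by simp only at h1 h2 ⊢; rw [h1, h2])
  · intro J hJ
    have hdisj : Disjoint (J ∩ Finset.range M) (J \ Finset.range M) :=
      Finset.disjoint_sdiff.mono_left Finset.inter_subset_right
    simp only
    rw [← Finset.prod_union hdisj]
    congr 1
    exact (sup_inf_sdiff J (Finset.range M)).symm

lemma esymm_mono (lam : ℕ → ℝ) (hpos : ∀ n, 0 ≤ lam n) (k : ℕ) {N N' : ℕ} (h : N ≤ N') :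
    esymm lam N k ≤ esymm lam N' k := by
  apply Finset.sum_le_sum_of_subset_of_nonneg
  · exact Finset.powersetCard_mono (Finset.range_subset_range.2 h)
  · exact fun J _ _ => Finset.prod_nonneg fun i _ => hpos i

/-- Proposition 2 (infinite version): for a nonnegative summable decreasing
sequence `λ` with tail sum `Λ_M = ∑_{n=M+1}^∞ λ_n`, the elementary symmetric
function of the infinite sequence (the supremum over finite truncations)
satisfies `e_k(λ_{1:∞}) ≤ ∑_{j=0}^k (Λ_M^j / j!) e_{k−j}(λ_1,...,λ_M)`. -/
theorem esymm_inf_le_tail_bound (M k : ℕ) (lam : ℕ → ℝ)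
    (hpos : ∀ n, 0 ≤ lam n) (hanti : Antitone lam) (hsum : Summable lam)
    (Λ : ℝ) (hΛ : Λ = ∑' n, lam (M + n)) :
    (⨆ N, esymm lam N k) ≤
      ∑ j ∈ Finset.range (k + 1), Λ ^ j / (j.factorial : ℝ) * esymm lam M (k - j) := by
  have htail : Summable (fun n => lam (M + n)) := by
    have := (summable_nat_add_iff M).2 hsum
    simpa [Nat.add_comm] using this
  apply ciSup_le
  intro N
  set N' := max M N with hN'
  have h1 : esymm lam N k ≤ esymm lam N' k := esymm_mono lam hpos k (le_max_right M N)
  refine h1.trans ?_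
  have hsplit := esymm_split M N' k lam (le_max_left M N)
  rw [esymm, hsplit]
  apply Finset.sum_le_sum
  intro j hj
  have hE : (0 : ℝ) ≤ ∑ A ∈ (Finset.range M).powersetCard (k - j), ∏ i ∈ A, lam i :=
    Finset.sum_nonneg fun A _ => Finset.prod_nonneg fun i _ => hpos i
  have hS : ∑ i ∈ Finset.Ico M N', lam i ≤ Λ := by
    rw [hΛ, Finset.sum_Ico_eq_sum_range]
    exact Summable.sum_le_tsum (Finset.range (N' - M)) (fun n _ => hpos _) htail
  have hS0 : (0 : ℝ) ≤ ∑ i ∈ Finset.Ico M N', lam i :=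
    Finset.sum_nonneg fun i _ => hpos i
  have hfac : (0 : ℝ) < (j.factorial : ℝ) := by positivity
  have hT : ∑ B ∈ (Finset.Ico M N').powersetCard j, ∏ i ∈ B, lam i
      ≤ Λ ^ j / (j.factorial : ℝ) := by
    rw [le_div_iff₀ hfac]
    calc (∑ B ∈ (Finset.Ico M N').powersetCard j, ∏ i ∈ B, lam i) * (j.factorial : ℝ)
        = (j.factorial : ℝ) * ∑ B ∈ (Finset.Ico M N').powersetCard j, ∏ i ∈ B, lam i := by
          ring
      _ ≤ (∑ i ∈ Finset.Ico M N', lam i) ^ j := esymm_finset_le _ lam hpos j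
      _ ≤ Λ ^ j := pow_le_pow_left₀ hS0 hS j
  calc (∑ A ∈ (Finset.range M).powersetCard (k - j), ∏ i ∈ A, lam i) *
        ∑ B ∈ (Finset.Ico M N').powersetCard j, ∏ i ∈ B, lam i
      ≤ (∑ A ∈ (Finset.range M).powersetCard (k - j), ∏ i ∈ A, lam i) *
        (Λ ^ j / (j.factorial : ℝ)) := mul_le_mul_of_nonneg_left hT hE
    _ = Λ ^ j / (j.factorial : ℝ) * esymm lam M (k - j) := by rw [esymm, mul_comm]
end
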